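/- arXiv:2406.06481 — 6 statements merged into one kernel-verified Lean document; each statement's English description precedes it below -/
import Mathlib

section
/- Suppose κ ≥ 1 and κ⁻¹‖v‖₂² ≤ vᵀΩv ≤ κ‖v‖₂² for all v ∈ ℝᵖ. Then for every index j, the population nodewise regression coefficient vector satisfies ‖α*_j‖₂ = ‖(Σ_{∖j,∖j})⁻¹ Σ_{∖j,j}‖₂ ≤ √(κ² − 1). -/
open Matrix

/-- The principal submatrix of `S` obtained by deleting row and column `j`. -/
def delSub {p : ℕ} (S : Matrix (Fin p) (Fin p) ℝ) (j : Fin p) :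
    Matrix {k : Fin p // k ≠ j} {k : Fin p // k ≠ j} ℝ :=
  fun k l => S k.1 l.1

/-- Column `j` of `S` with its `j`-th entry deleted. -/
def delCol {p : ℕ} (S : Matrix (Fin p) (Fin p) ℝ) (j : Fin p) :
    {k : Fin p // k ≠ j} → ℝ :=
  fun k => S k.1 j

/-- The population nodewise regression coefficient vector `α*_j = (Σ_{∖j,∖j})⁻¹ Σ_{∖j,j}`. -/
noncomputable def alphaStar {p : ℕ} (S : Matrix (Fin p) (Fin p) ℝ) (j : Fin p) :
    {k : Fin p // k ≠ j} → ℝ :=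
  (delSub S j)⁻¹ *ᵥ delCol S j

lemma psd_cs {n : Type*} [Fintype n] {M : Matrix n n ℝ} (hM : M.PosSemidef) (x y : n → ℝ) :
    (x ⬝ᵥ (M *ᵥ y)) ^ 2 ≤ (x ⬝ᵥ (M *ᵥ x)) * (y ⬝ᵥ (M *ᵥ y)) := by
  have hT : Mᵀ = M := by
    have := hM.1.eq
    rwa [conjTranspose_eq_transpose_of_trivial] at this
  have hsym : y ⬝ᵥ (M *ᵥ x) = x ⬝ᵥ (M *ᵥ y) := by
    rw [dotProduct_mulVec, ← mulVec_transpose, hT, dotProduct_comm]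
  have key : ∀ t : ℝ, 0 ≤ (y ⬝ᵥ (M *ᵥ y)) * (t * t) + (2 * (x ⬝ᵥ (M *ᵥ y))) * t
      + (x ⬝ᵥ (M *ᵥ x)) := by
    intro t
    have h := hM.dotProduct_mulVec_nonneg (x + t • y)
    simp only [star_trivial, mulVec_add, mulVec_smul, dotProduct_add, add_dotProduct,
      dotProduct_smul, smul_dotProduct, smul_eq_mul, hsym] at h
    linarith [h]
  have hd := discrim_le_zero key
  rw [discrim] at hd
  nlinarith [hd]

lemma sum_split {p : ℕ} (j : Fin p) (f : Fin p → ℝ) :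
    ∑ i, f i = f j + ∑ i : {k : Fin p // k ≠ j}, f i.1 := by
  rw [← Finset.add_sum_erase _ f (Finset.mem_univ j)]
  congr 1
  exact Finset.sum_subtype (p := fun k => k ≠ j) _ (fun x => by simp) f

lemma delSub_posDef {p : ℕ} {S : Matrix (Fin p) (Fin p) ℝ} (hS : S.PosDef) (j : Fin p) :
    (delSub S j).PosDef := by
  have hT : ∀ k l, S k l = S l k := fun k l => by
    have := congrFun (congrFun hS.1.eq l) k
    simpa [conjTranspose] using this
  rw [posDef_iff_dotProduct_mulVec]
  constructor
  · ext k l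
    simp [delSub, conjTranspose, hT k.1 l.1]
  · intro x hx
    set X : Fin p → ℝ := fun i => if h : i = j then 0 else x ⟨i, h⟩ with hXdef
    have hXj : X j = 0 := by simp [hXdef]
    have hXk : ∀ k : {k : Fin p // k ≠ j}, X k.1 = x k := fun k => by
      simp [hXdef, k.2]
    have hXne : X ≠ 0 := by
      intro h
      apply hx
      funext k
      have := congrFun h k.1
      rwa [hXk, Pi.zero_apply] at this
    have h := hS.dotProduct_mulVec_pos hXne
    rw [star_trivial] at h
    have hmv : ∀ k : {k : Fin p // k ≠ j}, (S *ᵥ X) k.1 = (delSub S j *ᵥ x) k := by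
      intro k
      show ∑ i, S k.1 i * X i = _
      rw [sum_split j]
      simp only [hXj, mul_zero, zero_add]
      simp only [hXk]
      rfl
    have hdp : X ⬝ᵥ (S *ᵥ X) = x ⬝ᵥ (delSub S j *ᵥ x) := by
      show ∑ i, X i * (S *ᵥ X) i = ∑ k, x k * (delSub S j *ᵥ x) k
      rw [sum_split j]
      simp only [hXj, zero_mul, zero_add]
      exact Finset.sum_congr rfl fun k _ => by rw [hXk, hmv]
    rw [star_trivial, ← hdp]
    exact h

/-- If `κ ≥ 1` and `κ⁻¹‖v‖₂² ≤ vᵀΩv ≤ κ‖v‖₂²` for all `v` (with `Ω = Σ⁻¹`), then for every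
index `j` the population nodewise regression coefficient vector satisfies
`‖α*_j‖₂ ≤ √(κ² − 1)`. -/
theorem stmt_4 (p : ℕ) (hp : 2 ≤ p) (S : Matrix (Fin p) (Fin p) ℝ)
    (hS : S.PosDef) (κ : ℝ) (hκ : 1 ≤ κ)
    (hbound : ∀ v : Fin p → ℝ,
      κ⁻¹ * (v ⬝ᵥ v) ≤ v ⬝ᵥ (S⁻¹ *ᵥ v) ∧ v ⬝ᵥ (S⁻¹ *ᵥ v) ≤ κ * (v ⬝ᵥ v))
    (j : Fin p) :
    Real.sqrt (alphaStar S j ⬝ᵥ alphaStar S j) ≤ Real.sqrt (κ ^ 2 - 1) := by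
  set α := alphaStar S j with hαdef
  set A := delSub S j with hAdef
  have hA : A.PosDef := delSub_posDef hS j
  have hAinv : A * A⁻¹ = 1 := A.mul_nonsing_inv (isUnit_iff_ne_zero.mpr hA.det_pos.ne')
  have hαeq : A *ᵥ α = delCol S j := by
    rw [hαdef, alphaStar, mulVec_mulVec, ← hAdef, hAinv, one_mulVec]
  set u : Fin p → ℝ := fun i => if h : i = j then 1 else -(α ⟨i, h⟩) with hudef
  have huj : u j = 1 := by simp [hudef]
  have huk : ∀ k : {k : Fin p // k ≠ j}, u k.1 = -(α k) := fun k => by simp [hudef, k.2]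
  have hune : u ≠ 0 := by
    intro h
    have := congrFun h j
    rw [huj, Pi.zero_apply] at this
    norm_num at this
  set c : ℝ := (S *ᵥ u) j with hcdef
  have hSu0 : ∀ k : {k : Fin p // k ≠ j}, (S *ᵥ u) k.1 = 0 := by
    intro k
    show ∑ i, S k.1 i * u i = 0
    rw [sum_split j]
    simp only [huj, mul_one, huk, mul_neg]
    have : ∑ i : {i : Fin p // i ≠ j}, -(S k.1 i.1 * α i) = -((A *ᵥ α) k) := by
      rw [Finset.sum_neg_distrib]
      rfl
    rw [this, hαeq]
    simp [delCol]
  have hc1 : u ⬝ᵥ (S *ᵥ u) = c := by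
    show ∑ i, u i * (S *ᵥ u) i = c
    rw [sum_split j, huj, one_mul]
    simp only [hSu0, mul_zero, Finset.sum_const_zero, add_zero, hcdef]
  have hcpos : 0 < c := by
    have := hS.dotProduct_mulVec_pos hune
    rwa [star_trivial, hc1] at this
  have hdet : S.det ≠ 0 := hS.det_pos.ne'
  have hinvS : S⁻¹ *ᵥ (S *ᵥ u) = u := by
    rw [mulVec_mulVec, S.nonsing_inv_mul (isUnit_iff_ne_zero.mpr hdet), one_mulVec]
  have hww : (S *ᵥ u) ⬝ᵥ (S *ᵥ u) = c * c := by
    show ∑ i, (S *ᵥ u) i * (S *ᵥ u) i = c * c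
    rw [sum_split j]
    simp only [hSu0, mul_zero, Finset.sum_const_zero, add_zero, hcdef]
  have hwu : (S *ᵥ u) ⬝ᵥ u = c := by
    show ∑ i, (S *ᵥ u) i * u i = c
    rw [sum_split j, huj]
    simp only [hSu0, zero_mul, Finset.sum_const_zero, add_zero, hcdef, mul_one]
  have hcκ : c ≤ κ := by
    have h := (hbound (S *ᵥ u)).1
    rw [hinvS, hww, hwu] at h
    have hκ0 : (0:ℝ) < κ := lt_of_lt_of_le one_pos hκ
    rw [inv_mul_le_iff₀ hκ0] at h
    nlinarith
  have huu : u ⬝ᵥ u = 1 + α ⬝ᵥ α := by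
    show ∑ i, u i * u i = 1 + α ⬝ᵥ α
    rw [sum_split j, huj, one_mul]
    congr 1
    exact Finset.sum_congr rfl fun k _ => by rw [huk]; ring
  have hαα : 0 ≤ α ⬝ᵥ α := Finset.sum_nonneg fun k _ => mul_self_nonneg _
  have hcs := psd_cs (hS.inv.posSemidef) u (S *ᵥ u)
  rw [hinvS, hwu] at hcs
  have hub := (hbound u).2
  have hκ0 : (0:ℝ) < κ := lt_of_lt_of_le one_pos hκ
  -- (u⬝u)^2 ≤ (u⬝Ωu) * c ≤ κ (u⬝u) c ≤ κ² (u⬝u)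
  have huupos : 0 < u ⬝ᵥ u := by rw [huu]; linarith
  have key : u ⬝ᵥ u ≤ κ ^ 2 := by
    have h1 : u ⬝ᵥ (S⁻¹ *ᵥ u) * c ≤ (κ * (u ⬝ᵥ u)) * c :=
      mul_le_mul_of_nonneg_right hub hcpos.le
    have h2 : (κ * (u ⬝ᵥ u)) * c ≤ (κ * (u ⬝ᵥ u)) * κ :=
      mul_le_mul_of_nonneg_left hcκ (by positivity)
    nlinarith [hcs, h1, h2, huupos]
  apply Real.sqrt_le_sqrt
  rw [huu] at key
  linarith
end

section
/- Let R be the correlation matrix of Σ, i.e. R_{kl} := Σ_{kl}/√(Σ_{kk} Σ_{ll}). If κ₁, κ₂ > 0 and κ₁⁻¹‖v‖₂² ≤ vᵀΩv ≤ κ₂‖v‖₂² for all v ∈ ℝᵖ, then (κ₁κ₂)⁻¹‖v‖₂² ≤ vᵀRv ≤ κ₁κ₂‖v‖₂² for all v ∈ ℝᵖ; in particular all eigenvalues of R lie in the interval [(κ₁κ₂)⁻¹, κ₁κ₂]. -/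
open Matrix

/-- The correlation matrix of `S`: `R_{kl} = S_{kl}/√(S_{kk} S_{ll})`. -/
noncomputable def corrMatrix {p : ℕ} (S : Matrix (Fin p) (Fin p) ℝ) :
    Matrix (Fin p) (Fin p) ℝ :=
  fun k l => S k l / Real.sqrt (S k k * S l l)

/-- Cauchy–Schwarz inequality for the bilinear form of a positive semidefinite real matrix. -/
lemma psd_cauchy_schwarz {p : ℕ} {A : Matrix (Fin p) (Fin p) ℝ} (hA : A.PosSemidef)
    (v w : Fin p → ℝ) :
    (v ⬝ᵥ (A *ᵥ w)) ^ 2 ≤ (v ⬝ᵥ (A *ᵥ v)) * (w ⬝ᵥ (A *ᵥ w)) := by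
  have hsymm : ∀ x y : Fin p → ℝ, x ⬝ᵥ (A *ᵥ y) = y ⬝ᵥ (A *ᵥ x) := by
    intro x y
    have hAT : Aᵀ = A := by
      have := hA.1
      simpa [Matrix.IsHermitian, Matrix.conjTranspose_eq_transpose_of_trivial] using this
    rw [dotProduct_mulVec, ← mulVec_transpose, hAT, dotProduct_comm]
  have key : ∀ t : ℝ, 0 ≤ (w ⬝ᵥ (A *ᵥ w)) * (t * t)
      + (2 * (v ⬝ᵥ (A *ᵥ w))) * t + (v ⬝ᵥ (A *ᵥ v)) := by
    intro t
    have h0 := hA.dotProduct_mulVec_nonneg (v + t • w)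
    simp only [star_trivial] at h0
    have hexp : (v + t • w) ⬝ᵥ (A *ᵥ (v + t • w))
        = (w ⬝ᵥ (A *ᵥ w)) * (t * t) + (2 * (v ⬝ᵥ (A *ᵥ w))) * t + (v ⬝ᵥ (A *ᵥ v)) := by
      rw [mulVec_add, mulVec_smul, add_dotProduct, smul_dotProduct, dotProduct_add,
        dotProduct_smul, dotProduct_add, dotProduct_smul, hsymm w v]
      simp [smul_eq_mul]; ring
    linarith [hexp ▸ h0]
  have hd := discrim_le_zero key
  rw [discrim] at hd
  nlinarith [hd]

/-- Bounds on the quadratic form of `S⁻¹` yield (inverted) bounds for `S`. -/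
lemma inv_bounds {p : ℕ} {S : Matrix (Fin p) (Fin p) ℝ} (hS : S.PosDef)
    {κ₁ κ₂ : ℝ} (hκ₁ : 0 < κ₁) (hκ₂ : 0 < κ₂)
    (hbound : ∀ v : Fin p → ℝ,
      κ₁⁻¹ * (v ⬝ᵥ v) ≤ v ⬝ᵥ (S⁻¹ *ᵥ v) ∧ v ⬝ᵥ (S⁻¹ *ᵥ v) ≤ κ₂ * (v ⬝ᵥ v)) :
    ∀ v : Fin p → ℝ, κ₂⁻¹ * (v ⬝ᵥ v) ≤ v ⬝ᵥ (S *ᵥ v) ∧ v ⬝ᵥ (S *ᵥ v) ≤ κ₁ * (v ⬝ᵥ v) := by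
  have hdet : IsUnit S.det := isUnit_iff_ne_zero.mpr (ne_of_gt hS.det_pos)
  have hinv : S⁻¹ * S = 1 := Matrix.nonsing_inv_mul S hdet
  have hOmulS : ∀ v, S⁻¹ *ᵥ (S *ᵥ v) = v := by
    intro v; rw [mulVec_mulVec, hinv, one_mulVec]
  intro v
  set a := v ⬝ᵥ v with ha
  set b := v ⬝ᵥ (S *ᵥ v) with hb
  have hdp : ∀ x : Fin p → ℝ, 0 ≤ x ⬝ᵥ x := fun x =>
    Finset.sum_nonneg fun i _ => mul_self_nonneg _
  have ha0 : 0 ≤ a := hdp v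
  have hb0 : 0 ≤ b := by simpa using hS.posSemidef.dotProduct_mulVec_nonneg v
  have hOb : (S *ᵥ v) ⬝ᵥ (S⁻¹ *ᵥ (S *ᵥ v)) = b := by
    rw [hOmulS]; exact dotProduct_comm _ _
  have hOa : v ⬝ᵥ (S⁻¹ *ᵥ (S *ᵥ v)) = a := by rw [hOmulS]
  constructor
  · have hcs := psd_cauchy_schwarz (hS.posSemidef.inv) v (S *ᵥ v)
    rw [hOa, hOb] at hcs
    have h2 := (hbound v).2
    have h3 : a ^ 2 ≤ κ₂ * a * b := by nlinarith [(hbound v).1, hOb]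
    rw [inv_mul_le_iff₀ hκ₂]
    rcases ha0.eq_or_lt with h | h
    · simpa [← h] using mul_nonneg hκ₂.le hb0
    · nlinarith
  · set c := (S *ᵥ v) ⬝ᵥ (S *ᵥ v) with hc
    have hc0 : 0 ≤ c := hdp _
    have h1 : κ₁⁻¹ * c ≤ b := by
      have := (hbound (S *ᵥ v)).1
      rwa [hOb] at this
    have hcs : b ^ 2 ≤ a * c := by
      have := psd_cauchy_schwarz (Matrix.PosSemidef.one (n := Fin p) (R := ℝ)) v (S *ᵥ v)
      simpa [one_mulVec, ← hb, ← ha, ← hc] using this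
    have h1' : c ≤ κ₁ * b := by rwa [inv_mul_le_iff₀ hκ₁] at h1
    rcases hb0.eq_or_lt with h | h
    · have := mul_nonneg hκ₁.le ha0; linarith
    · nlinarith

/-- If `κ₁⁻¹‖v‖₂² ≤ vᵀΩv ≤ κ₂‖v‖₂²` for all `v` (with `Ω = Σ⁻¹`, `κ₁, κ₂ > 0`), then the
correlation matrix `R` of `Σ` satisfies `(κ₁κ₂)⁻¹‖v‖₂² ≤ vᵀRv ≤ κ₁κ₂‖v‖₂²` for all `v`;
in particular all (real) eigenvalues of `R` lie in `[(κ₁κ₂)⁻¹, κ₁κ₂]`. -/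
theorem stmt_6 (p : ℕ) (S : Matrix (Fin p) (Fin p) ℝ) (hS : S.PosDef)
    (κ₁ κ₂ : ℝ) (hκ₁ : 0 < κ₁) (hκ₂ : 0 < κ₂)
    (hbound : ∀ v : Fin p → ℝ,
      κ₁⁻¹ * (v ⬝ᵥ v) ≤ v ⬝ᵥ (S⁻¹ *ᵥ v) ∧ v ⬝ᵥ (S⁻¹ *ᵥ v) ≤ κ₂ * (v ⬝ᵥ v)) :
    (∀ v : Fin p → ℝ,
      (κ₁ * κ₂)⁻¹ * (v ⬝ᵥ v) ≤ v ⬝ᵥ (corrMatrix S *ᵥ v) ∧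
        v ⬝ᵥ (corrMatrix S *ᵥ v) ≤ (κ₁ * κ₂) * (v ⬝ᵥ v)) ∧
      ∀ t : ℝ, t ∈ spectrum ℝ (corrMatrix S) → (κ₁ * κ₂)⁻¹ ≤ t ∧ t ≤ κ₁ * κ₂ := by
  have hSb := inv_bounds hS hκ₁ hκ₂ hbound
  -- diagonal bounds
  have hdiag : ∀ k : Fin p, κ₂⁻¹ ≤ S k k ∧ S k k ≤ κ₁ := by
    intro k
    have h := hSb (Pi.single k 1)
    have h1 : (Pi.single k 1 : Fin p → ℝ) ⬝ᵥ (Pi.single k 1) = 1 := by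
      simp [dotProduct, Pi.single_apply]
    have h2 : (Pi.single k 1 : Fin p → ℝ) ⬝ᵥ (S *ᵥ Pi.single k 1) = S k k := by
      simp [dotProduct, mulVec, Pi.single_apply, mul_comm]
    rw [h1, h2, mul_one, mul_one] at h
    exact h
  have hdpos : ∀ k : Fin p, 0 < S k k := fun k => lt_of_lt_of_le (by positivity) (hdiag k).1
  -- the main quadratic form bound
  have hmain : ∀ v : Fin p → ℝ,
      (κ₁ * κ₂)⁻¹ * (v ⬝ᵥ v) ≤ v ⬝ᵥ (corrMatrix S *ᵥ v) ∧
        v ⬝ᵥ (corrMatrix S *ᵥ v) ≤ (κ₁ * κ₂) * (v ⬝ᵥ v) := by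
    intro v
    set w : Fin p → ℝ := fun k => v k / Real.sqrt (S k k) with hw
    have hsqrt_pos : ∀ k, 0 < Real.sqrt (S k k) := fun k => Real.sqrt_pos.mpr (hdpos k)
    -- v ⬝ R v = w ⬝ S w
    have hqeq : v ⬝ᵥ (corrMatrix S *ᵥ v) = w ⬝ᵥ (S *ᵥ w) := by
      simp only [dotProduct, mulVec, dotProduct, corrMatrix, hw, Finset.mul_sum]
      refine Finset.sum_congr rfl fun k _ => Finset.sum_congr rfl fun l _ => ?_
      rw [Real.sqrt_mul (hdpos k).le]
      have hk := (hsqrt_pos k).ne'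
      have hl := (hsqrt_pos l).ne'
      field_simp
      try ring
    -- w ⬝ w bounds : κ₁⁻¹ (v⬝v) ≤ w⬝w ≤ κ₂ (v⬝v)
    have hwle : w ⬝ᵥ w ≤ κ₂ * (v ⬝ᵥ v) := by
      rw [dotProduct, dotProduct, Finset.mul_sum]
      refine Finset.sum_le_sum fun k _ => ?_
      have h1 := (hdiag k).1
      have h2 : w k * w k = v k * v k / S k k := by
        rw [hw]; rw [Real.mul_self_sqrt (hdpos k).le |>.symm]; field_simp; try ring
      rw [h2, div_le_iff₀ (hdpos k)]
      have h1' : 1 ≤ κ₂ * S k k := by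
        rw [← mul_inv_cancel₀ hκ₂.ne']
        exact mul_le_mul_of_nonneg_left h1 hκ₂.le
      nlinarith [mul_self_nonneg (v k)]
    have hwge : κ₁⁻¹ * (v ⬝ᵥ v) ≤ w ⬝ᵥ w := by
      rw [dotProduct, dotProduct, Finset.mul_sum]
      refine Finset.sum_le_sum fun k _ => ?_
      have h1 := (hdiag k).2
      have h2 : w k * w k = v k * v k / S k k := by
        rw [hw]; rw [Real.mul_self_sqrt (hdpos k).le |>.symm]; field_simp; try ring
      rw [h2, le_div_iff₀ (hdpos k)]
      have h1' : κ₁⁻¹ * κ₁ = 1 := inv_mul_cancel₀ hκ₁.ne'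
      have hc : 0 ≤ κ₁⁻¹ * (v k * v k) :=
        mul_nonneg (inv_pos.mpr hκ₁).le (mul_self_nonneg (v k))
      nlinarith [mul_le_mul_of_nonneg_left h1 hc]
    have hSw := hSb w
    constructor
    · rw [hqeq]
      calc (κ₁ * κ₂)⁻¹ * (v ⬝ᵥ v) = κ₂⁻¹ * (κ₁⁻¹ * (v ⬝ᵥ v)) := by
            rw [mul_inv]; ring
        _ ≤ κ₂⁻¹ * (w ⬝ᵥ w) := by
            exact mul_le_mul_of_nonneg_left hwge (by positivity)
        _ ≤ w ⬝ᵥ (S *ᵥ w) := hSw.1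
    · rw [hqeq]
      calc w ⬝ᵥ (S *ᵥ w) ≤ κ₁ * (w ⬝ᵥ w) := hSw.2
        _ ≤ κ₁ * (κ₂ * (v ⬝ᵥ v)) := mul_le_mul_of_nonneg_left hwle hκ₁.le
        _ = (κ₁ * κ₂) * (v ⬝ᵥ v) := by ring
  refine ⟨hmain, ?_⟩
  -- spectrum part
  intro t ht
  rw [spectrum.mem_iff] at ht
  have hdet0 : ((algebraMap ℝ (Matrix (Fin p) (Fin p) ℝ)) t - corrMatrix S).det = 0 := by
    by_contra h
    exact ht ((Matrix.isUnit_iff_isUnit_det _).mpr (isUnit_iff_ne_zero.mpr h))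
  obtain ⟨v, hv0, hv⟩ := (Matrix.exists_mulVec_eq_zero_iff).mpr hdet0
  have hRv : corrMatrix S *ᵥ v = t • v := by
    have : (algebraMap ℝ (Matrix (Fin p) (Fin p) ℝ)) t *ᵥ v - corrMatrix S *ᵥ v = 0 := by
      rw [← sub_mulVec, hv]
    have halg : (algebraMap ℝ (Matrix (Fin p) (Fin p) ℝ)) t *ᵥ v = t • v := by
      rw [Algebra.algebraMap_eq_smul_one, smul_mulVec, one_mulVec]
    rw [halg] at this
    exact (sub_eq_zero.mp this).symm
  have hvv : 0 < v ⬝ᵥ v := by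
    rcases (Finset.sum_nonneg fun i (_ : i ∈ Finset.univ) => mul_self_nonneg (v i)).lt_or_eq with h | h
    · exact h
    · exact absurd (dotProduct_self_eq_zero.mp h.symm) hv0
  have hq : v ⬝ᵥ (corrMatrix S *ᵥ v) = t * (v ⬝ᵥ v) := by
    rw [hRv, dotProduct_smul, smul_eq_mul]
  have h := hmain v
  rw [hq] at h
  constructor
  · exact le_of_mul_le_mul_right (by linarith [h.1]) hvv
  · exact le_of_mul_le_mul_right (by linarith [h.2]) hvv
end

section
/- Let Σ and Σ̂ be symmetric p×p real matrices and let Ω be a p×p real matrix with ΣΩ = I_p. Then for every p×p real matrix Ω̂ and all indices i, j, the following desparsification identity holds: Ω̂_{ij} − (Ω̂_{·i})ᵀ(Σ̂ Ω̂_{·j} − e_j) − Ω_{ij} = −(Ω_{·i})ᵀ(Σ̂ − Σ)(Ω_{·j}) − (Ω̂_{·j} − Ω_{·j})ᵀ(Σ̂ Ω_{·i} − e_i) − (Ω̂_{·i} − Ω_{·i})ᵀ(Σ̂ Ω̂_{·j} − e_j). -/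
open Matrix

/-- The desparsification identity: if `Σ` and `Σ̂` are symmetric and `ΣΩ = I`, then for any
matrix `Ω̂` and indices `i, j`,
`Ω̂_{ij} − Ω̂_{·i}ᵀ(Σ̂ Ω̂_{·j} − e_j) − Ω_{ij}
  = −Ω_{·i}ᵀ(Σ̂ − Σ)Ω_{·j} − (Ω̂_{·j} − Ω_{·j})ᵀ(Σ̂ Ω_{·i} − e_i)
    − (Ω̂_{·i} − Ω_{·i})ᵀ(Σ̂ Ω̂_{·j} − e_j)`. -/
theorem stmt_8 (p : ℕ) (S Shat Om Omhat : Matrix (Fin p) (Fin p) ℝ)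
    (hS : S.IsSymm) (hShat : Shat.IsSymm) (hSOm : S * Om = 1) (i j : Fin p) :
    Omhat i j - (fun k => Omhat k i) ⬝ᵥ (Shat *ᵥ (fun k => Omhat k j) - Pi.single j 1) -
        Om i j =
      -((fun k => Om k i) ⬝ᵥ ((Shat - S) *ᵥ fun k => Om k j)) -
        ((fun k => Omhat k j) - fun k => Om k j) ⬝ᵥ
          (Shat *ᵥ (fun k => Om k i) - Pi.single i 1) -
        ((fun k => Omhat k i) - fun k => Om k i) ⬝ᵥ
          (Shat *ᵥ (fun k => Omhat k j) - Pi.single j 1) := by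
  have hOmS : Om * S = 1 := mul_eq_one_comm.mp hSOm
  have hOmsym : Omᵀ = Om := by
    have h1 : Omᵀ * S = 1 := by
      calc Omᵀ * S = (Sᵀ * Om)ᵀ := by rw [Matrix.transpose_mul, Matrix.transpose_transpose]
        _ = 1 := by rw [hS.eq, hSOm, Matrix.transpose_one]
    calc Omᵀ = Omᵀ * (S * Om) := by rw [hSOm, mul_one]
      _ = (Omᵀ * S) * Om := by rw [mul_assoc]
      _ = Om := by rw [h1, one_mul]
  have hcol : ∀ k : Fin p, S *ᵥ (fun l => Om l k) = Pi.single k 1 := by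
    intro k
    funext m
    have := congrFun (congrFun hSOm m) k
    simpa [Matrix.mul_apply, Matrix.mulVec, dotProduct, Matrix.one_apply,
      Pi.single_apply, eq_comm] using this
  have hsym : ∀ x y : Fin p → ℝ, x ⬝ᵥ (Shat *ᵥ y) = y ⬝ᵥ (Shat *ᵥ x) := by
    intro x y
    rw [Matrix.dotProduct_mulVec, ← Matrix.mulVec_transpose, hShat.eq,
      dotProduct_comm]
  have hOmij : Om j i = Om i j := by
    have := congrFun (congrFun hOmsym j) i
    simpa [Matrix.transpose_apply] using this.symm
  simp only [Matrix.sub_mulVec, dotProduct_sub, sub_dotProduct, hcol,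
    dotProduct_single, single_dotProduct, mul_one, one_mul]
  rw [hsym (fun k => Om k j) (fun k => Om k i), hsym (fun k => Om k i) (fun k => Omhat k j)]
  simp only [Pi.sub_apply]
  linarith [hOmij]
end

section
/- Let X be an n×p real matrix with n ≥ 1, j an index, and A ⊆ {1,…,p} with j ∉ A; write X_A for the n×|A| matrix of the columns of X indexed by A and X_{·j} for column j. Assume the Gram matrix X_AᵀX_A is invertible, set β̂ := (X_AᵀX_A)⁻¹X_AᵀX_{·j} and r := X_{·j} − X_A β̂, and assume r ≠ 0, so that σ̂² := ‖r‖₂²/n > 0. Define ω ∈ ℝᵖ by ω_j = σ̂⁻², ω_k = −σ̂⁻² β̂_k for k ∈ A, and ω_k = 0 for k ∉ A ∪ {j}, and set Σ̂ := XᵀX/n. Then (Σ̂ ω)_k = 1 if k = j, (Σ̂ ω)_k = 0 for k ∈ A, and (Σ̂ ω)_k = σ̂⁻² (X_{·k}ᵀ r)/n for every k ∉ A ∪ {j}. -/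
open Matrix

/-- The `n × |A|` submatrix of the columns of `X` indexed by `A`. -/
def colsIn {n p : ℕ} (X : Matrix (Fin n) (Fin p) ℝ) (A : Finset (Fin p)) :
    Matrix (Fin n) ↥A ℝ :=
  fun r k => X r k.1

/-- The KKT-type identity for the OLS fit of column `j` of `X` on the columns in `A`:
with `β̂ = (X_AᵀX_A)⁻¹X_AᵀX_{·j}`, `r = X_{·j} − X_Aβ̂`, `σ̂² = ‖r‖₂²/n`, `ω` as defined,
and `Σ̂ = XᵀX/n`, one has `(Σ̂ω)_j = 1`, `(Σ̂ω)_k = 0` for `k ∈ A`, and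
`(Σ̂ω)_k = σ̂⁻²(X_{·k}ᵀ r)/n` otherwise. -/
theorem stmt_9 (n p : ℕ) (hn : 1 ≤ n) (X : Matrix (Fin n) (Fin p) ℝ)
    (j : Fin p) (A : Finset (Fin p)) (hj : j ∉ A)
    (hGram : IsUnit ((colsIn X A)ᵀ * colsIn X A).det)
    (betahat : ↥A → ℝ)
    (hbeta : betahat = ((colsIn X A)ᵀ * colsIn X A)⁻¹ *ᵥ ((colsIn X A)ᵀ *ᵥ fun r => X r j))
    (r : Fin n → ℝ) (hres : r = (fun row => X row j) - colsIn X A *ᵥ betahat)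
    (hr0 : r ≠ 0)
    (σ2 : ℝ) (hσ2 : σ2 = (r ⬝ᵥ r) / (n : ℝ))
    (ω : Fin p → ℝ)
    (hω : ω = fun k =>
      if k = j then σ2⁻¹ else if h : k ∈ A then -σ2⁻¹ * betahat ⟨k, h⟩ else 0)
    (Shat : Matrix (Fin p) (Fin p) ℝ) (hShat : Shat = (n : ℝ)⁻¹ • (Xᵀ * X)) :
    (Shat *ᵥ ω) j = 1 ∧ (∀ k ∈ A, (Shat *ᵥ ω) k = 0) ∧
      ∀ k : Fin p, k ≠ j → k ∉ A →
        (Shat *ᵥ ω) k = σ2⁻¹ * (((fun row => X row k) ⬝ᵥ r) / (n : ℝ)) := by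
  have hn0 : (n : ℝ) ≠ 0 := Nat.cast_ne_zero.mpr (by omega)
  set M := colsIn X A with hM
  -- normal equations
  have hnormal : Mᵀ *ᵥ r = 0 := by
    have h1 : Mᵀ *ᵥ (M *ᵥ betahat) = Mᵀ *ᵥ fun row => X row j := by
      rw [hbeta]
      simp only [Matrix.mulVec_mulVec]
      rw [← Matrix.mul_assoc, ← Matrix.mul_assoc, Matrix.mul_nonsing_inv _ hGram, Matrix.one_mul]
    rw [hres, Matrix.mulVec_sub, h1, sub_self]
  -- X ω = σ2⁻¹ • r
  have hXω : X *ᵥ ω = σ2⁻¹ • r := by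
    funext i
    have hsub : (Finset.univ : Finset (Fin p)).sum (fun k => X i k * ω k)
        = (insert j A).sum (fun k => X i k * ω k) := by
      refine (Finset.sum_subset (Finset.subset_univ _) ?_).symm
      intro k _ hk
      have hkj : k ≠ j := fun h => hk (by simp [h])
      have hkA : k ∉ A := fun h => hk (by simp [h])
      simp [hω, hkj, hkA]
    have hA : A.sum (fun k => X i k * ω k)
        = A.attach.sum (fun k => X i k.1 * (-σ2⁻¹ * betahat k)) := by
      rw [← Finset.sum_attach A (fun k => X i k * ω k)]
      refine Finset.sum_congr rfl ?_
      intro k _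
      have hkj : (k : Fin p) ≠ j := fun h => hj (h ▸ k.2)
      simp [hω, hkj]
    have hMb : (M *ᵥ betahat) i = A.attach.sum (fun k => X i k.1 * betahat k) := by
      simp [Matrix.mulVec, dotProduct, Finset.univ_eq_attach, hM, colsIn]
    have : (X *ᵥ ω) i = (Finset.univ : Finset (Fin p)).sum (fun k => X i k * ω k) := rfl
    rw [this, hsub, Finset.sum_insert hj, hA]
    have hωj : ω j = σ2⁻¹ := by simp [hω]
    rw [hωj]
    have : r i = X i j - (M *ᵥ betahat) i := by rw [hres]; rfl
    simp only [Pi.smul_apply, smul_eq_mul, this, hMb, Finset.mul_sum, mul_sub]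
    have hc : ∀ x ∈ A.attach, X i x.1 * (-σ2⁻¹ * betahat x)
        = -(σ2⁻¹ * (X i x.1 * betahat x)) := fun x _ => by ring
    rw [Finset.sum_congr rfl hc, Finset.sum_neg_distrib]
    ring
  -- main formula
  have hmain : ∀ k : Fin p, (Shat *ᵥ ω) k = (n : ℝ)⁻¹ * (σ2⁻¹ * ((fun row => X row k) ⬝ᵥ r)) := by
    intro k
    have : Shat *ᵥ ω = (n : ℝ)⁻¹ • (Xᵀ *ᵥ (X *ᵥ ω)) := by
      rw [hShat, Matrix.smul_mulVec, Matrix.mulVec_mulVec]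
    rw [this, hXω, Matrix.mulVec_smul]
    have : (Xᵀ *ᵥ r) k = (fun row => X row k) ⬝ᵥ r := by
      simp [Matrix.mulVec, dotProduct, Matrix.transpose]
    simp only [Pi.smul_apply, smul_eq_mul, this]
  have hσ2ne : σ2 ≠ 0 := by
    rw [hσ2]
    have : r ⬝ᵥ r ≠ 0 := fun h => hr0 ((dotProduct_self_eq_zero).mp h)
    exact div_ne_zero this hn0
  refine ⟨?_, ?_, ?_⟩
  · rw [hmain j]
    have hMbr : (M *ᵥ betahat) ⬝ᵥ r = 0 := by
      rw [dotProduct_comm, Matrix.dotProduct_mulVec, ← Matrix.mulVec_transpose,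
        hnormal]
      simp
    have hjr : (fun row => X row j) ⬝ᵥ r = r ⬝ᵥ r := by
      have : (fun row => X row j) = r + M *ᵥ betahat := by
        rw [hres]; funext i; simp
      rw [this, add_dotProduct, hMbr, add_zero]
    rw [hjr]
    have : r ⬝ᵥ r = σ2 * n := by rw [hσ2]; field_simp
    rw [this]
    field_simp
  · intro k hk
    rw [hmain k]
    have : (fun row => X row k) ⬝ᵥ r = (Mᵀ *ᵥ r) ⟨k, hk⟩ := by
      simp [Matrix.mulVec, dotProduct, Matrix.transpose, hM, colsIn]
    rw [this, hnormal]
    simp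
  · intro k _ _
    rw [hmain k]
    ring
end

section
/- Let A ⊆ {1,…,p} and j ∈ A, and suppose column j of Ω is supported in A, i.e. Ω_{kj} = 0 for every k ∉ A. Then the inverse of the principal submatrix reproduces this column: ((Σ_{AA})⁻¹)_{kj} = Ω_{kj} for every k ∈ A. -/
open Matrix

/-- The principal submatrix `S_{AA}` of `S` indexed by `A`. -/
def subIdx {p : ℕ} (S : Matrix (Fin p) (Fin p) ℝ) (A : Finset (Fin p)) :
    Matrix ↥A ↥A ℝ :=
  fun k l => S k.1 l.1

lemma subIdx_posDef {p : ℕ} (S : Matrix (Fin p) (Fin p) ℝ) (hS : S.PosDef)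
    (A : Finset (Fin p)) : (subIdx S A).PosDef := by
  rw [posDef_iff_dotProduct_mulVec]
  constructor
  · exact hS.1.submatrix (Subtype.val : ↥A → Fin p)
  · intro x hx
    classical
    set y : Fin p → ℝ := fun i => if h : i ∈ A then x ⟨i, h⟩ else 0 with hy
    have hxy : ∀ l : ↥A, x l = y l.1 := by
      rintro ⟨l, hl⟩; simp [hy, hl]
    have hy0 : y ≠ 0 := by
      intro h
      apply hx
      ext ⟨i, hi⟩
      have := congrFun h i
      simpa [hy, hi] using this
    have step1 : ∀ i : Fin p, (∑ l : ↥A, S i l.1 * x l) = ∑ l, S i l * y l := by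
      intro i
      calc (∑ l : ↥A, S i l.1 * x l) = ∑ l : ↥A, S i l.1 * y l.1 := by
            exact Finset.sum_congr rfl fun l _ => by rw [hxy l]
        _ = ∑ l ∈ A, S i l * y l := by
            rw [Finset.univ_eq_attach, Finset.sum_attach A (fun t => S i t * y t)]
        _ = ∑ l, S i l * y l := by
            refine Finset.sum_subset (Finset.subset_univ A) fun l _ hl => by simp [hy, hl]
    have key : (star x) ⬝ᵥ (subIdx S A *ᵥ x) = (star y) ⬝ᵥ (S *ᵥ y) := by
      simp only [dotProduct, mulVec, star_trivial, subIdx]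
      calc (∑ i : ↥A, x i * ∑ l : ↥A, S i.1 l.1 * x l)
          = ∑ i : ↥A, y i.1 * ∑ l, S i.1 l * y l := by
            exact Finset.sum_congr rfl fun i _ => by rw [hxy i, step1 i.1]
        _ = ∑ i ∈ A, y i * ∑ l, S i l * y l := by
            rw [Finset.univ_eq_attach, Finset.sum_attach A (fun t => y t * ∑ l, S t l * y l)]
        _ = ∑ i, y i * ∑ l, S i l * y l := by
            refine Finset.sum_subset (Finset.subset_univ A) fun i _ hi => by simp [hy, hi]
    rw [key]
    exact hS.dotProduct_mulVec_pos hy0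

/-- If column `j` of `Ω = Σ⁻¹` is supported in `A ∋ j`, then the inverse of the principal
submatrix `Σ_{AA}` reproduces this column: `((Σ_{AA})⁻¹)_{kj} = Ω_{kj}` for all `k ∈ A`. -/
theorem stmt_11 (p : ℕ) (S : Matrix (Fin p) (Fin p) ℝ) (hS : S.PosDef)
    (A : Finset (Fin p)) (j : Fin p) (hj : j ∈ A)
    (hsupp : ∀ k : Fin p, k ∉ A → S⁻¹ k j = 0) :
    ∀ (k : Fin p) (hk : k ∈ A), (subIdx S A)⁻¹ ⟨k, hk⟩ ⟨j, hj⟩ = S⁻¹ k j := by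
  classical
  intro k hk
  set M := subIdx S A with hM
  have hMpd : M.PosDef := subIdx_posDef S hS A
  have hMunit : IsUnit M.det := hMpd.det_pos.ne'.isUnit
  set v : ↥A → ℝ := fun l => S⁻¹ l.1 j with hv
  have hcol : M *ᵥ v = Pi.single (⟨j, hj⟩ : ↥A) 1 := by
    ext i
    have : (M *ᵥ v) i = ∑ l, S i.1 l * S⁻¹ l j := by
      simp only [mulVec, dotProduct, hM, subIdx, hv]
      calc (∑ l : ↥A, S i.1 l.1 * S⁻¹ l.1 j)
          = ∑ l ∈ A, S i.1 l * S⁻¹ l j := by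
            rw [Finset.univ_eq_attach, Finset.sum_attach A (fun t => S i.1 t * S⁻¹ t j)]
        _ = ∑ l, S i.1 l * S⁻¹ l j := by
            refine Finset.sum_subset (Finset.subset_univ A) fun l _ hl => by
              rw [hsupp l hl, mul_zero]
    rw [this]
    have hSone : S * S⁻¹ = 1 := mul_nonsing_inv S hS.det_pos.ne'.isUnit
    have : (S * S⁻¹) i.1 j = (1 : Matrix (Fin p) (Fin p) ℝ) i.1 j := by rw [hSone]
    simp only [Matrix.mul_apply] at this
    rw [this]
    by_cases h : (i : ↥A) = ⟨j, hj⟩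
    · subst h; simp [Matrix.one_apply]
    · have hij : i.1 ≠ j := fun he => h (Subtype.ext he)
      simp [Matrix.one_apply, hij, Pi.single_eq_of_ne h]
  have : M⁻¹ *ᵥ (M *ᵥ v) = v := by
    rw [mulVec_mulVec, nonsing_inv_mul M hMunit, one_mulVec]
  rw [hcol] at this
  have := congrFun this ⟨k, hk⟩
  simpa [hv] using this
end

section
/- (Deterministic core of the comparison of asymptotic variances of the Nodewise Loreg and desparsified estimators under Gaussian data.) Let A ⊆ {1,…,p}, let i, j ∈ A with i ≠ j, and suppose column j of Ω is supported in A, i.e. Ω_{kj} = 0 for every k ∉ A. Let Θ := (Σ_{A∖{j}, A∖{j}})⁻¹ be the inverse of the principal submatrix of Σ indexed by A∖{j}. Then Θ_{ii}·Ω_{jj} + 2Ω_{ij}² ≤ Ω_{ii}Ω_{jj} + Ω_{ij}², and equality holds if and only if Ω_{ki} = 0 for every k ∉ A. -/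
open Matrix

/-- Positive definiteness is preserved by taking principal submatrices along an
injective map. -/
lemma posDef_submatrix_inj {m n : Type*} [Fintype m] [Fintype n] [DecidableEq m] [DecidableEq n]
    {M : Matrix n n ℝ} (hM : M.PosDef) {e : m → n} (he : Function.Injective e) :
    (M.submatrix e e).PosDef := by
  classical
  refine Matrix.posDef_iff_dotProduct_mulVec.mpr ⟨?_, ?_⟩
  · have h := hM.1
    ext k l
    simpa [Matrix.conjTranspose_apply, Matrix.submatrix_apply] using congrFun (congrFun h (e k)) (e l)
  · intro x hx
    set y : n → ℝ := fun l => ∑ k, if e k = l then x k else 0 with hy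
    have hyek : ∀ k, y (e k) = x k := by
      intro k
      simp [hy, he.eq_iff]
    have hy0 : y ≠ 0 := by
      obtain ⟨k, hk⟩ := Function.ne_iff.mp hx
      intro h
      exact hk (by rw [← hyek k, h]; simp)
    have hrow : ∀ l : n, (M *ᵥ y) l = ∑ k', M l (e k') * x k' := by
      intro l
      simp only [Matrix.mulVec, dotProduct, hy, Finset.mul_sum, mul_ite, mul_zero]
      rw [Finset.sum_comm]
      refine Finset.sum_congr rfl fun k' _ => ?_
      simp
    have key : star x ⬝ᵥ (M.submatrix e e) *ᵥ x = star y ⬝ᵥ M *ᵥ y := by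
      simp only [star_trivial, dotProduct, hrow, hy,
        Finset.sum_mul, ite_mul, zero_mul]
      rw [Finset.sum_comm]
      refine Finset.sum_congr rfl fun k _ => ?_
      rw [Finset.sum_ite_eq, if_pos (Finset.mem_univ _)]
      simp [Matrix.mulVec, dotProduct, Matrix.submatrix_apply, Finset.mul_sum]
      rw [Finset.sum_comm]
      simp
    rw [key]
    exact hM.dotProduct_mulVec_pos hy0


/-- Deterministic core of the comparison of asymptotic variances: for `i, j ∈ A`, `i ≠ j`,
if column `j` of `Ω = Σ⁻¹` is supported in `A`, and `Θ = (Σ_{A∖{j},A∖{j}})⁻¹`, then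
`Θ_{ii}Ω_{jj} + 2Ω_{ij}² ≤ Ω_{ii}Ω_{jj} + Ω_{ij}²`, with equality iff `Ω_{ki} = 0` for all
`k ∉ A`. -/
theorem stmt_14 (p : ℕ) (S : Matrix (Fin p) (Fin p) ℝ) (hS : S.PosDef)
    (A : Finset (Fin p)) (i j : Fin p) (hi : i ∈ A) (hj : j ∈ A) (hij : i ≠ j)
    (hsupp : ∀ k : Fin p, k ∉ A → S⁻¹ k j = 0) :
    (subIdx S (A.erase j))⁻¹ ⟨i, Finset.mem_erase.mpr ⟨hij, hi⟩⟩
          ⟨i, Finset.mem_erase.mpr ⟨hij, hi⟩⟩ * S⁻¹ j j + 2 * (S⁻¹ i j) ^ 2 ≤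
        S⁻¹ i i * S⁻¹ j j + (S⁻¹ i j) ^ 2 ∧
      ((subIdx S (A.erase j))⁻¹ ⟨i, Finset.mem_erase.mpr ⟨hij, hi⟩⟩
            ⟨i, Finset.mem_erase.mpr ⟨hij, hi⟩⟩ * S⁻¹ j j + 2 * (S⁻¹ i j) ^ 2 =
          S⁻¹ i i * S⁻¹ j j + (S⁻¹ i j) ^ 2 ↔
        ∀ k : Fin p, k ∉ A → S⁻¹ k i = 0) := by
  classical
  set Om := S⁻¹ with hOmdef
  have hOm : Om.PosDef := hS.inv
  have hsym : ∀ k l, Om k l = Om l k := by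
    intro k l
    conv_lhs => rw [← hOm.1]
    simp [Matrix.conjTranspose_apply]
  set B : Finset (Fin p) := A.erase j with hB
  set E := {x : Fin p // ¬ x ∈ B} with hE
  set e : {x : Fin p // x ∈ B} ⊕ E ≃ Fin p :=
    Equiv.sumCompl (fun x => x ∈ B) with he
  set N11 : Matrix ↥B ↥B ℝ := Om.submatrix Subtype.val Subtype.val with hN11
  set N12 : Matrix ↥B E ℝ := Om.submatrix Subtype.val Subtype.val with hN12
  set N21 : Matrix E ↥B ℝ := Om.submatrix Subtype.val Subtype.val with hN21
  set N22 : Matrix E E ℝ := Om.submatrix Subtype.val Subtype.val with hN22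
  set N : Matrix (↥B ⊕ E) (↥B ⊕ E) ℝ := Om.submatrix e e with hN
  have heinl : ∀ k : {x : Fin p // x ∈ B}, e (Sum.inl k) = k.1 := fun k => rfl
  have heinr : ∀ k : E, e (Sum.inr k) = k.1 := fun k => rfl
  have hNpd : N.PosDef := posDef_submatrix_inj hOm e.injective
  have hN22pd : N22.PosDef := posDef_submatrix_inj hOm Subtype.val_injective
  haveI iN : Invertible N := N.invertibleOfIsUnitDet (isUnit_iff_ne_zero.mpr hNpd.det_pos.ne')
  haveI iN22 : Invertible N22 :=
    N22.invertibleOfIsUnitDet (isUnit_iff_ne_zero.mpr hN22pd.det_pos.ne')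
  have hNblocks : N = fromBlocks N11 N12 N21 N22 := by
    ext (k | k) (l | l) <;>
      simp [hN, hN11, hN12, hN21, hN22, Matrix.fromBlocks, heinl, heinr]
  haveI iF : Invertible (fromBlocks N11 N12 N21 N22) := iN.copy _ hNblocks.symm
  haveI iSchur : Invertible (N11 - N12 * ⅟N22 * N21) :=
    invertibleOfFromBlocks₂₂Invertible N11 N12 N21 N22
  have hMN : N⁻¹ = S.submatrix e e := by
    rw [hN, ← Matrix.inv_submatrix_equiv S e e,
      Matrix.nonsing_inv_nonsing_inv _ (isUnit_iff_ne_zero.mpr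
        (posDef_submatrix_inj hS e.injective).det_pos.ne')]
  have h3 := Matrix.invOf_fromBlocks₂₂_eq N11 N12 N21 N22
  have h4 : ⅟(fromBlocks N11 N12 N21 N22) = S.submatrix e e := by
    rw [Matrix.invOf_eq_nonsing_inv, ← hNblocks, hMN]
  rw [h4] at h3
  have h2 : subIdx S B = ⅟(N11 - N12 * ⅟N22 * N21) := by
    ext k l
    have hkl := congrFun (congrFun h3 (Sum.inl k)) (Sum.inl l)
    simpa [subIdx, Matrix.fromBlocks, heinl, heinr] using hkl
  have hkey : (subIdx S B)⁻¹ = N11 - N12 * N22⁻¹ * N21 := by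
    rw [h2, Matrix.invOf_eq_nonsing_inv,
      Matrix.nonsing_inv_nonsing_inv _ (Matrix.isUnit_det_of_invertible _),
      Matrix.invOf_eq_nonsing_inv]
  -- the vector setup
  set w : E → ℝ := fun k => Om k.1 i with hw
  have hjB : ¬ (j ∈ B) := by simp [hB]
  set jE : E := ⟨j, hjB⟩ with hjE
  set dl : E → ℝ := Pi.single jE 1 with hdl
  have hjj : 0 < Om j j := by
    have h := hOm.dotProduct_mulVec_pos (x := Pi.single j 1) (by
      intro h
      have := congrFun h j
      simp at this)
    simpa [Matrix.mulVec_single, dotProduct_single, Pi.single_apply] using h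
  have hN22dl : N22 *ᵥ dl = Om j j • dl := by
    funext k
    rw [hdl, Matrix.mulVec_single]
    by_cases hk : k = jE
    · subst hk; simp [hN22, hjE, Pi.single_apply]
    · have hkj : k.1 ≠ j := fun h => hk (Subtype.ext h)
      have hkA : k.1 ∉ A := fun hmem => k.2 (by simp [hB, Finset.mem_erase, hkj, hmem])
      simp [hN22, Pi.single_apply, hk, hsupp _ hkA]
      exact hsupp _ hkA
  have hdet22 : IsUnit N22.det := isUnit_iff_ne_zero.mpr hN22pd.det_pos.ne'
  have hinvdl : N22⁻¹ *ᵥ dl = (Om j j)⁻¹ • dl := by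
    have h5 : N22⁻¹ *ᵥ (N22 *ᵥ dl) = dl := by
      rw [Matrix.mulVec_mulVec, Matrix.nonsing_inv_mul _ hdet22, Matrix.one_mulVec]
    rw [hN22dl, Matrix.mulVec_smul] at h5
    calc N22⁻¹ *ᵥ dl = (Om j j)⁻¹ • (Om j j • (N22⁻¹ *ᵥ dl)) := by
          rw [smul_smul, inv_mul_cancel₀ hjj.ne', one_smul]
      _ = (Om j j)⁻¹ • dl := by rw [h5]
  have hN22invpd : (N22⁻¹).PosDef := hN22pd.inv
  have hsymT : (N22⁻¹)ᵀ = N22⁻¹ := by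
    ext k l
    conv_lhs => rw [Matrix.transpose_apply, ← hN22invpd.1]
    simp [Matrix.conjTranspose_apply]
  set v : E → ℝ := fun k => if k = jE then 0 else Om k.1 i with hv
  have hwv : w = v + Om j i • dl := by
    funext k
    by_cases hk : k = jE
    · subst hk; simp [hw, hv, hdl, hjE]
    · simp [hw, hv, hdl, hk, Pi.single_apply]
  set r : ℝ := v ⬝ᵥ N22⁻¹ *ᵥ v with hr
  have hdlv : dl ⬝ᵥ v = 0 := by simp [hdl, hv, single_dotProduct]
  have hvdl : v ⬝ᵥ dl = 0 := by simp [hdl, hv, dotProduct_single]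
  have hdldl : dl ⬝ᵥ dl = (1 : ℝ) := by simp [hdl, single_dotProduct, Pi.single_apply]
  have hdlNv : dl ⬝ᵥ (N22⁻¹ *ᵥ v) = 0 := by
    rw [Matrix.dotProduct_mulVec, ← Matrix.mulVec_transpose, hsymT, hinvdl]
    simp [hdlv]
  have hq : w ⬝ᵥ N22⁻¹ *ᵥ w = r + Om j i * Om j i * (Om j j)⁻¹ := by
    rw [hwv]
    simp only [Matrix.mulVec_add, Matrix.mulVec_smul, dotProduct_add,
      add_dotProduct, dotProduct_smul, smul_dotProduct, hinvdl,
      hdlNv, hdlv, hvdl, hdldl, smul_eq_mul]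
    rw [hr]
    ring
  have hrpos : v ≠ 0 → 0 < r := fun hv0 => by
    simpa [hr] using hN22invpd.dotProduct_mulVec_pos hv0
  have hr0 : 0 ≤ r := by
    by_cases hv0 : v = 0
    · simp [hr, hv0]
    · exact (hrpos hv0).le
  have hriff : r = 0 ↔ v = 0 := by
    constructor
    · intro h
      by_contra hv0
      exact (hrpos hv0).ne' h
    · intro h; simp [hr, h]
  have hviff : v = 0 ↔ ∀ k : Fin p, k ∉ A → Om k i = 0 := by
    constructor
    · intro h k hk
      have hkj : k ≠ j := fun hkj => hk (hkj ▸ hj)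
      have hkB : ¬ k ∈ B := by
        simp only [hB, Finset.mem_erase]
        exact fun hc => hk hc.2
      have h6 := congrFun h ⟨k, hkB⟩
      have hne : (⟨k, hkB⟩ : E) ≠ jE := fun hc => hkj (congrArg Subtype.val hc)
      simpa [hv, hne] using h6
    · intro h
      funext k
      by_cases hk : k = jE
      · simp [hv, hk]
      · have hkj : k.1 ≠ j := fun hc => hk (Subtype.ext hc)
        have hkA : k.1 ∉ A := fun hmem => k.2 (by simp [hB, Finset.mem_erase, hkj, hmem])
        simp [hv, hk, h _ hkA]
  have hiB : i ∈ B := Finset.mem_erase.mpr ⟨hij, hi⟩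
  have hTheta : (subIdx S (A.erase j))⁻¹ ⟨i, Finset.mem_erase.mpr ⟨hij, hi⟩⟩
      ⟨i, Finset.mem_erase.mpr ⟨hij, hi⟩⟩ = Om i i - w ⬝ᵥ N22⁻¹ *ᵥ w := by
    show (subIdx S B)⁻¹ ⟨i, hiB⟩ ⟨i, hiB⟩ = _
    rw [hkey]
    simp only [Matrix.sub_apply, hN11, Matrix.submatrix_apply]
    congr 1
    rw [Matrix.mul_assoc]
    simp only [Matrix.mul_apply, dotProduct, Matrix.mulVec, hN12, hN21,
      Matrix.submatrix_apply, hw]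
    exact Finset.sum_congr rfl fun k _ => by rw [hsym i k.1]
  rw [hTheta, hq, hsym i j]
  have hexp : (Om i i - (r + Om j i * Om j i * (Om j j)⁻¹)) * Om j j + 2 * Om j i ^ 2 =
      Om i i * Om j j + Om j i ^ 2 - r * Om j j := by
    field_simp
    ring
  rw [hexp]
  constructor
  · nlinarith [mul_nonneg hr0 hjj.le]
  · constructor
    · intro hEq
      have hrz : r * Om j j = 0 := by linarith
      have hr0' : r = 0 := by
        rcases mul_eq_zero.mp hrz with h | h
        · exact h
        · exact absurd h hjj.ne'
      exact hviff.mp (hriff.mp hr0')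
    · intro hcol
      have : r = 0 := hriff.mpr (hviff.mpr hcol)
      rw [this]
      ring
end
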